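/- Let F be a finite field with q elements and let k, s, t, ω be integers with 1 ≤ k ≤ s ≤ t and 0 ≤ ω ≤ s. For every function g : F^{t−k} × F^{s−k} → (subsets of F) × (subsets of F), the number of pairs (A, B) of feature sets with |A| = t, |B| = s, |A ∩ B| = ω such that g(rec_k(A), rec_k(B)) = (A, B) is at most q^{min(t+s−2k, 2t+s−2ω−k)}. Equivalently, for a uniformly random such pair (A, B), the probability that g recovers (A, B) from the two deterministic vault records is at most q^{min(t+s−2k, 2t+s−2ω−k)} divided by the total number of such pairs. (This is Corollary 3, the bound on full recovery attacks via record multiplicity, in the case of uniformly distributed feature sets.) -/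

import Mathlib

open Polynomial Finset

/-- The characteristic polynomial of a finite subset `A` of a field:
`χ_A(X) = ∏_{a ∈ A} (X - a)`. -/
noncomputable def charPoly {F : Type*} [Field F] (A : Finset F) : F[X] :=
  ∏ a ∈ A, (X - C a)

/-- The deterministic vault record of a feature set `A` of size `n` with
parameter `k`: the tuple of coefficients of `X^k, …, X^{n−1}` of `χ_A`. -/
noncomputable def vRec {F : Type*} [Field F] (n k : ℕ) (A : Finset F) :
    Fin (n - k) → F :=
  fun j => (charPoly A).coeff (k + (j : ℕ))

lemma charPoly_monic {F : Type*} [Field F] (A : Finset F) : (charPoly A).Monic :=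
  monic_prod_of_monic _ _ fun a _ => monic_X_sub_C a

lemma charPoly_natDegree {F : Type*} [Field F] (A : Finset F) :
    (charPoly A).natDegree = A.card := by
  unfold charPoly
  rw [natDegree_prod]
  · simp [natDegree_X_sub_C]
  · intro a _; exact X_sub_C_ne_zero a

/-- If `P` and `Q` agree on coefficients of degree `≥ k`, then `P*E` and `Q*E`
agree on coefficients of degree `≥ k + deg E`. -/
lemma coeff_mul_eq_of_high {F : Type*} [Field F] {P Q E : F[X]} {k : ℕ}
    (h : ∀ m, k ≤ m → P.coeff m = Q.coeff m) :
    ∀ m, k + E.natDegree ≤ m → (P * E).coeff m = (Q * E).coeff m := by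
  intro m hm
  rw [coeff_mul, coeff_mul]
  apply Finset.sum_congr rfl
  intro x hx
  have hx' := Finset.HasAntidiagonal.mem_antidiagonal.mp hx
  rcases le_or_gt k x.1 with h1 | h1
  · rw [h _ h1]
  · have h2 : E.natDegree < x.2 := by omega
    rw [coeff_eq_zero_of_natDegree_lt h2, mul_zero, mul_zero]

/-- Cancellation: if `D` is monic and `P*D`, `Q*D` agree on coefficients of
degree `≥ k + deg D`, then `P` and `Q` agree on coefficients of degree `≥ k`. -/
lemma coeff_eq_of_mul_monic {F : Type*} [Field F] {P Q D : F[X]} (hD : D.Monic) {k : ℕ}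
    (h : ∀ m, k + D.natDegree ≤ m → (P * D).coeff m = (Q * D).coeff m) :
    ∀ m, k ≤ m → P.coeff m = Q.coeff m := by
  intro m hm
  by_contra hne
  set R := P - Q with hR
  have hRm : R.coeff m ≠ 0 := by
    rw [hR, coeff_sub]
    exact sub_ne_zero_of_ne hne
  have hR0 : R ≠ 0 := fun h0 => hRm (by simp [h0])
  have hdeg : k ≤ R.natDegree := le_trans hm (le_natDegree_of_ne_zero hRm)
  have key : (R * D).coeff (R.natDegree + D.natDegree) = R.leadingCoeff * D.leadingCoeff :=
    coeff_mul_degree_add_degree R D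
  have z : (R * D).coeff (R.natDegree + D.natDegree) = 0 := by
    have hh := h (R.natDegree + D.natDegree) (by omega)
    have hRD : R * D = P * D - Q * D := by rw [hR]; ring
    rw [hRD, coeff_sub, hh, sub_self]
  rw [key, hD.leadingCoeff, mul_one] at z
  exact hR0 (leadingCoeff_eq_zero.mp z)

/-- Corollary 3 of the paper (bound on full recovery attacks via record
multiplicity): for any recovery function `g`, the number of pairs `(A, B)` of
feature sets with `|A| = t`, `|B| = s`, `|A ∩ B| = ω` that `g` recovers from
their two deterministic vault records is at most
`q^{min(t+s−2k, 2t+s−2ω−k)}`. -/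
theorem stmt7 {F : Type*} [Field F] [Fintype F] [DecidableEq F]
    (k s t ω : ℕ) (hk : 1 ≤ k) (hks : k ≤ s) (hst : s ≤ t) (hω : ω ≤ s)
    (g : ((Fin (t - k) → F) × (Fin (s - k) → F)) → Finset F × Finset F) :
    Set.ncard { p : Finset F × Finset F |
        p.1.card = t ∧ p.2.card = s ∧ (p.1 ∩ p.2).card = ω ∧
        g (vRec t k p.1, vRec s k p.2) = p }
      ≤ (Fintype.card F) ^ min (t + s - 2 * k) (2 * t + s - 2 * ω - k) := by
  classical
  set q := Fintype.card F with hq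
  set Sfin : Finset (Finset F × Finset F) :=
    Finset.univ.filter (fun p => p.1.card = t ∧ p.2.card = s ∧ (p.1 ∩ p.2).card = ω ∧
      g (vRec t k p.1, vRec s k p.2) = p) with hSfin
  have hset : { p : Finset F × Finset F |
      p.1.card = t ∧ p.2.card = s ∧ (p.1 ∩ p.2).card = ω ∧
      g (vRec t k p.1, vRec s k p.2) = p } = ↑Sfin := by
    ext p
    simp [hSfin]
  rw [hset, Set.ncard_coe_finset]
  -- membership facts
  have hmem : ∀ p ∈ Sfin, p.1.card = t ∧ p.2.card = s ∧ (p.1 ∩ p.2).card = ω ∧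
      g (vRec t k p.1, vRec s k p.2) = p := by
    intro p hp
    exact (Finset.mem_filter.mp hp).2
  -- Bound 1 : via records
  have h1 : Sfin.card ≤ q ^ (t + s - 2 * k) := by
    have hinj : Set.InjOn (fun p : Finset F × Finset F => (vRec t k p.1, vRec s k p.2))
        ↑Sfin := by
      intro p hp p' hp' heq
      obtain ⟨-, -, -, hgp⟩ := hmem p hp
      obtain ⟨-, -, -, hgp'⟩ := hmem p' hp'
      have heq' : (vRec t k p.1, vRec s k p.2) = (vRec t k p'.1, vRec s k p'.2) := heq
      rw [← hgp, ← hgp', heq']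
    have := Finset.card_le_card_of_injOn
      (fun p : Finset F × Finset F => (vRec t k p.1, vRec s k p.2))
      (fun a _ => Finset.mem_univ _) hinj
    calc Sfin.card ≤ (Finset.univ : Finset ((Fin (t - k) → F) × (Fin (s - k) → F))).card :=
          this
      _ = q ^ (t - k) * q ^ (s - k) := by
          simp [Finset.card_univ, hq]
      _ = q ^ (t + s - 2 * k) := by
          rw [← pow_add]
          congr 1
          omega
  -- Bound 2 : via (record of A, A \ B, B \ A)
  have h2 : Sfin.card ≤ q ^ (2 * t + s - 2 * ω - k) := by
    set T : Finset ((Fin (t - k) → F) × Finset F × Finset F) :=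
      Finset.univ ×ˢ (Finset.powersetCard (t - ω) Finset.univ ×ˢ
        Finset.powersetCard (s - ω) Finset.univ) with hT
    have hmaps : ∀ p ∈ Sfin,
        (vRec t k p.1, p.1 \ p.2, p.2 \ p.1) ∈ T := by
      intro p hp
      obtain ⟨hA, hB, hAB, -⟩ := hmem p hp
      have c1 : (p.1 \ p.2).card = t - ω := by
        have := Finset.card_sdiff_add_card_inter p.1 p.2
        omega
      have c2 : (p.2 \ p.1).card = s - ω := by
        have := Finset.card_sdiff_add_card_inter p.2 p.1
        rw [Finset.inter_comm] at this
        omega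
      simp [hT, Finset.mem_powersetCard_univ, c1, c2]
    have hinj : Set.InjOn
        (fun p : Finset F × Finset F => (vRec t k p.1, p.1 \ p.2, p.2 \ p.1)) ↑Sfin := by
      intro p hp p' hp' heq
      obtain ⟨hA, hB, hABω, hgp⟩ := hmem p hp
      obtain ⟨hA', hB', hABω', hgp'⟩ := hmem p' hp'
      obtain ⟨A, B⟩ := p
      obtain ⟨A', B'⟩ := p'
      simp only [Prod.mk.injEq] at heq hA hB hABω hA' hB' hABω'
      obtain ⟨hvA, hdAB, hdBA⟩ := heq
      -- coefficients of χ_A and χ_{A'} agree in degrees ≥ k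
      have cA : ∀ m, k ≤ m → (charPoly A).coeff m = (charPoly A').coeff m := by
        intro m hm
        rcases lt_trichotomy m t with h | h | h
        · have hj : m - k < t - k := by omega
          have := congrFun hvA ⟨m - k, hj⟩
          simpa [vRec, Nat.add_sub_cancel' hm] using this
        · have e1 : (charPoly A).coeff m = 1 := by
            have hd : (charPoly A).natDegree = m := by rw [charPoly_natDegree, hA, h]
            rw [← hd]; exact (charPoly_monic A).coeff_natDegree
          have e2 : (charPoly A').coeff m = 1 := by
            have hd : (charPoly A').natDegree = m := by rw [charPoly_natDegree, hA', h]
            rw [← hd]; exact (charPoly_monic A').coeff_natDegree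
          rw [e1, e2]
        · rw [coeff_eq_zero_of_natDegree_lt (by rw [charPoly_natDegree, hA]; omega),
            coeff_eq_zero_of_natDegree_lt (by rw [charPoly_natDegree, hA']; omega)]
      -- key identity χ_A * χ_{B\A} = χ_B * χ_{A\B}
      have key : ∀ (A B : Finset F),
          charPoly A * charPoly (B \ A) = charPoly B * charPoly (A \ B) := by
        intro A B
        unfold charPoly
        rw [← Finset.prod_union Finset.disjoint_sdiff,
          ← Finset.prod_union Finset.disjoint_sdiff,
          Finset.union_sdiff_self_eq_union, Finset.union_sdiff_self_eq_union,
          Finset.union_comm]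
      have cdAB : (A \ B).card = t - ω := by
        have := Finset.card_sdiff_add_card_inter A B
        omega
      have cdBA : (B \ A).card = s - ω := by
        have := Finset.card_sdiff_add_card_inter B A
        rw [Finset.inter_comm] at this
        omega
      -- products agree in high degrees
      have hprod : ∀ m, k + (charPoly (A \ B)).natDegree ≤ m →
          (charPoly B * charPoly (A \ B)).coeff m
            = (charPoly B' * charPoly (A' \ B')).coeff m := by
        intro m hm
        rw [charPoly_natDegree, cdAB] at hm
        have h1 : (charPoly B * charPoly (A \ B)).coeff m
            = (charPoly A * charPoly (B \ A)).coeff m := by rw [key]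
        have h2 : (charPoly A * charPoly (B \ A)).coeff m
            = (charPoly A' * charPoly (B \ A)).coeff m := by
          apply coeff_mul_eq_of_high cA
          rw [charPoly_natDegree, cdBA]
          omega
        have h3 : (charPoly A' * charPoly (B \ A)).coeff m
            = (charPoly B' * charPoly (A' \ B')).coeff m := by
          rw [hdBA, key]
        rw [h1, h2, h3]
      rw [hdAB] at hprod
      have cB : ∀ m, k ≤ m → (charPoly B).coeff m = (charPoly B').coeff m :=
        coeff_eq_of_mul_monic (charPoly_monic (A' \ B')) hprod
      have hvB : vRec s k B = vRec s k B' := by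
        funext j
        exact cB (k + (j : ℕ)) (by omega)
      have hvA' : vRec t k A = vRec t k A' := hvA
      rw [← hgp, ← hgp']
      simp only
      rw [hvA', hvB]
    have hcard := Finset.card_le_card_of_injOn _ hmaps hinj
    have hT2 : T.card = q ^ (t - k) * (Nat.choose q (t - ω) * Nat.choose q (s - ω)) := by
      simp [hT, Finset.card_powersetCard, Finset.card_univ, hq]
    calc Sfin.card ≤ T.card := hcard
      _ = q ^ (t - k) * (Nat.choose q (t - ω) * Nat.choose q (s - ω)) := hT2
      _ ≤ q ^ (t - k) * (q ^ (t - ω) * q ^ (s - ω)) := by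
          exact Nat.mul_le_mul_left _ (Nat.mul_le_mul (Nat.choose_le_pow _ _)
            (Nat.choose_le_pow _ _))
      _ = q ^ (2 * t + s - 2 * ω - k) := by
          rw [← pow_add, ← pow_add]
          congr 1
          omega
  rcases min_cases (t + s - 2 * k) (2 * t + s - 2 * ω - k) with ⟨hmin, -⟩ | ⟨hmin, -⟩ <;>
    rw [hmin]
  · exact h1
  · exact h2
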